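/- Let D be a digraph of order n ≥ 3, let C := x_1x_2…x_{n-1}x_1 be a cycle of length n−1 in D (subscripts modulo n−1), and let y be the vertex not on C. If D contains no Hamiltonian bypass, then d^+(y) ≤ (n−1)/2, d^-(y) ≤ (n−1)/2, and d(y) ≤ n−1. -/

import Mathlib

open Finset

variable {V : Type*}

/-- Out-degree of a vertex. -/
def outDeg [Fintype V] (A : V → V → Prop) [DecidableRel A] (v : V) : ℕ :=
  (Finset.univ.filter (fun u => A v u)).card

/-- In-degree of a vertex. -/
def inDeg [Fintype V] (A : V → V → Prop) [DecidableRel A] (v : V) : ℕ :=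
  (Finset.univ.filter (fun u => A u v)).card

/-- Degree of a vertex: out-degree plus in-degree. -/
def deg [Fintype V] (A : V → V → Prop) [DecidableRel A] (v : V) : ℕ :=
  outDeg A v + inDeg A v

/-- Two vertices are adjacent if there is an arc between them in some direction. -/
def Adj (A : V → V → Prop) (u v : V) : Prop := A u v ∨ A v u

/-- Condition (*): for every pair of non-adjacent vertices with a common in-neighbour,
`min {d(x), d(y)} ≥ n - 1` and `d(x) + d(y) ≥ 2n - 1`. -/
def CondStar [Fintype V] (A : V → V → Prop) [DecidableRel A] : Prop :=
  ∀ x y : V, x ≠ y → ¬ Adj A x y → (∃ z : V, A z x ∧ A z y) →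
    min (deg A x) (deg A y) ≥ Fintype.card V - 1 ∧
    deg A x + deg A y ≥ 2 * Fintype.card V - 1

/-- A Hamiltonian bypass: an ordering `x₁, …, xₙ` of all vertices such that
`x₁x₂, …, x_{n-1}xₙ` and `x₁xₙ` are all arcs. -/
def HamBypass (A : V → V → Prop) : Prop :=
  ∃ l : List V, l.Nodup ∧ (∀ v : V, v ∈ l) ∧ l.Chain' A ∧
    ∃ a b : V, l.head? = some a ∧ l.getLast? = some b ∧ A a b


theorem stmt3_aux {V : Type*} [Fintype V] [DecidableEq V] (A : V → V → Prop) [DecidableRel A]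
    (hloop : Irreflexive A)
    (n : ℕ) (hcard : Fintype.card V = n) (hn : 3 ≤ n)
    (x : ZMod (n - 1) → V) (hinj : Function.Injective x)
    (hcyc : ∀ i : ZMod (n - 1), A (x i) (x (i + 1)))
    (y : V) (hy : ∀ i : ZMod (n - 1), y ≠ x i)
    (hnb : ¬ ∃ l : List V, l.Nodup ∧ (∀ v : V, v ∈ l) ∧ l.Chain' A ∧
      ∃ a b : V, l.head? = some a ∧ l.getLast? = some b ∧ A a b) :
    2 * (Finset.univ.filter (fun u => A y u)).card ≤ n - 1 ∧
    2 * (Finset.univ.filter (fun u => A u y)).card ≤ n - 1 := by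
  have hm2 : 2 ≤ n - 1 := by omega
  haveI : NeZero (n - 1) := ⟨by omega⟩
  have hcardZ : Fintype.card (ZMod (n - 1)) = n - 1 := ZMod.card _
  -- every vertex is y or on the cycle
  have hsurj : ∀ v : V, v = y ∨ ∃ i, v = x i := by
    have hynot : y ∉ Finset.univ.image x := by
      simp only [mem_image]
      rintro ⟨i, -, hi⟩
      exact hy i hi.symm
    have huniv : (insert y (Finset.univ.image x) : Finset V) = Finset.univ := by
      apply Finset.eq_univ_of_card
      rw [Finset.card_insert_of_notMem hynot, Finset.card_image_of_injective _ hinj,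
        Finset.card_univ, hcardZ, hcard]
      omega
    intro v
    have hv : v ∈ (insert y (Finset.univ.image x) : Finset V) := huniv ▸ mem_univ v
    simp only [Finset.mem_insert, Finset.mem_image, Finset.mem_univ, true_and] at hv
    rcases hv with h | ⟨i, hi⟩
    · exact Or.inl h
    · exact Or.inr ⟨i, hi.symm⟩
  -- the path list starting at x j going around the cycle
  set L : ZMod (n-1) → List V :=
    fun j => (List.range (n-1)).map (fun k : ℕ => x (j + (k : ZMod (n-1)))) with hL
  have hsplit : n - 1 = (n - 2) + 1 := by omega
  have hrw1 : List.range (n-1) = List.range ((n-2)+1) := by rw [← hsplit]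
  have hrw2 : List.range (n-1) = 0 :: (List.range (n-2)).map Nat.succ := by
    rw [hrw1, List.range_succ_eq_map]
  have hrw3 : List.range (n-1) = List.range (n-2) ++ [n-2] := by
    rw [hrw1, List.range_succ]
  have hnd : ∀ j, (L j).Nodup := by
    intro j
    refine List.Nodup.map_on ?_ List.nodup_range
    intro k hk k' hk' hxx
    rw [List.mem_range] at hk hk'
    have h2 : (k : ZMod (n-1)) = (k' : ZMod (n-1)) := by
      have := hinj hxx
      exact add_left_cancel this
    have := congrArg ZMod.val h2
    rwa [ZMod.val_cast_of_lt hk, ZMod.val_cast_of_lt hk'] at this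
  have hch : ∀ j, (L j).Chain' A := by
    intro j
    unfold List.Chain'; rw [hL, List.isChain_map, hrw1, List.isChain_range_succ]
    intro k hk
    have hc : ((k + 1 : ℕ) : ZMod (n-1)) = (k : ZMod (n-1)) + 1 := by push_cast; ring
    rw [hc, ← add_assoc]
    exact hcyc _
  have hmemx : ∀ j i, x i ∈ L j := by
    intro j i
    rw [hL]
    simp only [List.mem_map, List.mem_range]
    refine ⟨(i - j).val, ZMod.val_lt _, ?_⟩
    have : (((i - j).val : ℕ) : ZMod (n-1)) = i - j :=
      (ZMod.natCast_val _).trans (ZMod.cast_id _ _)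
    rw [this]
    congr 1
    ring
  have hyL : ∀ j, y ∉ L j := by
    intro j h
    rw [hL] at h
    simp only [List.mem_map, List.mem_range] at h
    obtain ⟨k, -, hk⟩ := h
    exact hy _ hk.symm
  have hall : ∀ j v, v ∈ y :: L j := by
    intro j v
    rcases hsurj v with rfl | ⟨i, rfl⟩
    · exact List.mem_cons_self
    · exact List.mem_cons_of_mem _ (hmemx j i)
  have hhead : ∀ j, (L j).head? = some (x j) := by
    intro j
    rw [hL, hrw2]
    simp
  have hlast : ∀ j, (L j).getLast? = some (x (j - 1)) := by
    intro j
    rw [hL]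
    simp only [hrw3, List.map_append, List.map_cons, List.map_nil, List.getLast?_concat]
    congr 1
    have h0 : ((n - 2 : ℕ) : ZMod (n-1)) = -1 := by
      have h1 : (((n - 2) + 1 : ℕ) : ZMod (n-1)) = 0 := by rw [← hsplit]; exact ZMod.natCast_self _
      push_cast at h1
      exact eq_neg_of_add_eq_zero_left h1
    rw [h0, sub_eq_add_neg]
  have hcons : ∀ j, ∃ b t, L j = b :: t := by
    intro j
    cases h : L j with
    | nil =>
      have : (L j).length = n - 1 := by rw [hL]; simp
      rw [h] at this
      simp at this
      omega
    | cons b t => exact ⟨b, t, rfl⟩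
  -- no two consecutive out-neighbours
  have hout : ∀ i : ZMod (n-1), A y (x i) → A y (x (i+1)) → False := by
    intro i h1 h2
    apply hnb
    refine ⟨y :: L (i+1), List.nodup_cons.mpr ⟨hyL _, hnd _⟩, hall _, ?_, y, x i, rfl, ?_, h1⟩
    · unfold List.Chain'; rw [List.isChain_cons]
      refine ⟨?_, hch _⟩
      rw [hhead]
      rintro b hb
      rw [Option.mem_some_iff] at hb
      rw [← hb]
      exact h2
    · obtain ⟨b, t, hbt⟩ := hcons (i+1)
      rw [hbt, List.getLast?_cons_cons, ← hbt, hlast]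
      congr 1
      congr 1
      ring
  have hin : ∀ i : ZMod (n-1), A (x i) y → A (x (i+1)) y → False := by
    intro i h1 h2
    apply hnb
    obtain ⟨b, t, hbt⟩ := hcons (i+1)
    refine ⟨L (i+1) ++ [y], ?_, ?_, ?_, x (i+1), y, ?_, List.getLast?_concat, h2⟩
    · rw [List.nodup_append]
      exact ⟨hnd _, List.nodup_singleton y, fun a ha b hb => by
        rw [List.mem_singleton] at hb; subst hb; exact fun h => hyL _ (h ▸ ha)⟩
    · intro v
      rcases hsurj v with rfl | ⟨k, rfl⟩
      · simp
      · exact List.mem_append_left _ (hmemx _ k)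
    · unfold List.Chain'; rw [List.isChain_append]
      refine ⟨hch _, List.isChain_singleton _, ?_⟩
      rw [hlast]
      rintro a ha c hc
      rw [Option.mem_some_iff] at ha
      simp only [List.head?_cons, Option.mem_some_iff] at hc
      subst ha; subst hc
      have : i + 1 - 1 = i := by ring
      rw [this]
      exact h1
    · rw [hbt]
      simp only [List.cons_append, List.head?_cons]
      have := hhead (i+1)
      rw [hbt] at this
      simp only [List.head?_cons, Option.some.injEq] at this
      rw [this]
  -- counting
  have key : ∀ (S : Finset (ZMod (n-1))), (∀ i ∈ S, i + 1 ∉ S) → 2 * S.card ≤ n - 1 := by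
    intro S hS
    have himg : S.image (· + 1) ⊆ Sᶜ := by
      intro j hj
      rw [Finset.mem_image] at hj
      obtain ⟨i, hi, rfl⟩ := hj
      rw [Finset.mem_compl]
      exact hS i hi
    have h1 : (S.image (· + 1)).card = S.card :=
      Finset.card_image_of_injective _ (add_left_injective 1)
    have h2 : S.card ≤ Sᶜ.card := h1 ▸ Finset.card_le_card himg
    have h3 : S.card + Sᶜ.card = n - 1 := by
      rw [Finset.card_add_card_compl, hcardZ]
    omega
  have hfilt : ∀ (p : V → Prop) [DecidablePred p], ¬ p y →
      (Finset.univ.filter p).card = (Finset.univ.filter (fun i => p (x i))).card := by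
    intro p _ hpy
    have : Finset.univ.filter p = (Finset.univ.filter (fun i => p (x i))).image x := by
      ext u
      simp only [Finset.mem_filter, Finset.mem_univ, true_and, Finset.mem_image]
      constructor
      · intro hu
        rcases hsurj u with rfl | ⟨i, rfl⟩
        · exact absurd hu hpy
        · exact ⟨i, hu, rfl⟩
      · rintro ⟨i, hi, rfl⟩
        exact hi
    rw [this, Finset.card_image_of_injective _ hinj]
  constructor
  · rw [hfilt (fun u => A y u) (hloop y)]
    exact key _ (fun i hi h => by
      rw [Finset.mem_filter] at hi h
      exact hout i hi.2 h.2)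
  · rw [hfilt (fun u => A u y) (hloop y)]
    exact key _ (fun i hi h => by
      rw [Finset.mem_filter] at hi h
      exact hin i hi.2 h.2)

theorem stmt3 [Fintype V] [DecidableEq V] (A : V → V → Prop) [DecidableRel A]
    (hloop : Irreflexive A)
    (n : ℕ) (hcard : Fintype.card V = n) (hn : 3 ≤ n)
    (x : ZMod (n - 1) → V) (hinj : Function.Injective x)
    (hcyc : ∀ i : ZMod (n - 1), A (x i) (x (i + 1)))
    (y : V) (hy : ∀ i : ZMod (n - 1), y ≠ x i)
    (hnb : ¬ HamBypass A) :
    outDeg A y ≤ (n - 1) / 2 ∧ inDeg A y ≤ (n - 1) / 2 ∧ deg A y ≤ n - 1 := by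
  have h := stmt3_aux A hloop n hcard hn x hinj hcyc y hy hnb
  have hdeg : deg A y = outDeg A y + inDeg A y := rfl
  have ho : outDeg A y = (Finset.univ.filter (fun u => A y u)).card := rfl
  have hi : inDeg A y = (Finset.univ.filter (fun u => A u y)).card := rfl
  omega
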